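/- Let S and A be finite nonempty sets, let p (true dynamics) and p̂ (learned model) be dynamics kernels, let π_D and π be policies, ρ0 an initial state distribution, r a reward bounded by r_max ≥ 0, γ ∈ (0,1), and k ∈ ℕ. Suppose (i) for every timestep t, the expectation over (s,a) drawn from the time-t state-action marginal of π_D under p of TV(p(·|s,a), p̂(·|s,a)) is at most ε_m, and (ii) max_s TV(π_D(·|s), π(·|s)) ≤ ε_π. Let η^branch[π] denote the return of the k-branched process that runs policy π under the model p̂ for the first k timesteps and policy π_D under the true dynamics p thereafter. Then η[π] ≥ η^branch[π] − 2·r_max·[ γ^{k+1}·ε_π/(1−γ)² + (γ^k + 2)·ε_π/(1−γ) + k·(ε_m + 2ε_π)/(1−γ) ], where η[π] is the return of π under p. -/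

import Mathlib

open scoped BigOperators

/-- Total variation distance between two probability mass functions on a finite type. -/
noncomputable def tv {X : Type*} [Fintype X] (q1 q2 : PMF X) : ℝ :=
  (1 / 2) * ∑ x, |(q1 x).toReal - (q2 x).toReal|

/-- Total variation distance between two real-valued distributions on a finite type. -/
noncomputable def tvFun {X : Type*} [Fintype X] (d1 d2 : X → ℝ) : ℝ :=
  (1 / 2) * ∑ x, |d1 x - d2 x|

/-- Time-`t` state-action marginal of a (possibly time-varying) policy/dynamics pair,
started from initial state distribution `ρ0`:  `d⁰(s,a) = ρ0(s)·π₀(a|s)` and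
`d^{t+1}(s,a) = Σ_{s',a'} d^t(s',a')·p_t(s|s',a')·π_{t+1}(a|s)`. -/
noncomputable def marginal {S A : Type*} [Fintype S] [Fintype A]
    (ρ0 : PMF S) (πseq : ℕ → S → PMF A) (pseq : ℕ → S × A → PMF S) :
    ℕ → S × A → ℝ
  | 0 => fun sa => (ρ0 sa.1).toReal * ((πseq 0 sa.1) sa.2).toReal
  | t + 1 => fun sa =>
      ∑ s' : S, ∑ a' : A,
        marginal ρ0 πseq pseq t (s', a') * ((pseq t (s', a')) sa.1).toReal *
          ((πseq (t + 1) sa.1) sa.2).toReal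

/-- Discounted return `η = Σ_t γ^t Σ_{s,a} d^t(s,a)·r(s,a)`. -/
noncomputable def ret {S A : Type*} [Fintype S] [Fintype A]
    (γ : ℝ) (r : S × A → ℝ) (d : ℕ → S × A → ℝ) : ℝ :=
  ∑' t : ℕ, γ ^ t * ∑ sa : S × A, d t sa * r sa


lemma sum_pmf_toReal {X : Type*} [Fintype X] (q : PMF X) : ∑ x, (q x).toReal = 1 := by
  have h : ∑' x, q x = 1 := q.tsum_coe
  rw [tsum_fintype] at h
  have := congrArg ENNReal.toReal h
  rwa [ENNReal.toReal_sum (fun x _ => q.apply_ne_top x)] at this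

lemma tv_nonneg {X : Type*} [Fintype X] (q1 q2 : PMF X) : 0 ≤ tv q1 q2 := by
  unfold tv
  positivity

lemma tv_comm {X : Type*} [Fintype X] (q1 q2 : PMF X) : tv q1 q2 = tv q2 q1 := by
  unfold tv
  congr 1
  exact Finset.sum_congr rfl fun x _ => abs_sub_comm _ _

lemma tv_self {X : Type*} [Fintype X] (q : PMF X) : tv q q = 0 := by
  simp [tv]

section M
variable {S A : Type*} [Fintype S] [Fintype A]

lemma sum_kernel (pt : PMF S) (πt : S → PMF A) :
    ∑ sa : S × A, (pt sa.1).toReal * ((πt sa.1) sa.2).toReal = 1 := by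
  rw [Fintype.sum_prod_type]
  simp_rw [← Finset.mul_sum, sum_pmf_toReal, mul_one]
  exact sum_pmf_toReal pt

lemma marginal_nonneg (ρ0 : PMF S) (πs : ℕ → S → PMF A) (ps : ℕ → S × A → PMF S) :
    ∀ t sa, 0 ≤ marginal ρ0 πs ps t sa := by
  intro t
  induction t with
  | zero => intro sa; unfold marginal; positivity
  | succ t ih =>
      intro sa
      unfold marginal
      apply Finset.sum_nonneg; intro s' _
      apply Finset.sum_nonneg; intro a' _
      have := ih (s', a')
      positivity

lemma marginal_sum_one (ρ0 : PMF S) (πs : ℕ → S → PMF A) (ps : ℕ → S × A → PMF S) :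
    ∀ t, ∑ sa : S × A, marginal ρ0 πs ps t sa = 1 := by
  intro t
  induction t with
  | zero =>
      show ∑ sa : S × A, (ρ0 sa.1).toReal * ((πs 0 sa.1) sa.2).toReal = 1
      exact sum_kernel ρ0 (πs 0)
  | succ t ih =>
      show ∑ sa : S × A, ∑ s' : S, ∑ a' : A,
          marginal ρ0 πs ps t (s', a') * ((ps t (s', a')) sa.1).toReal *
            ((πs (t + 1) sa.1) sa.2).toReal = 1
      rw [Finset.sum_comm]
      have : ∀ s' : S, ∑ sa : S × A, ∑ a' : A,
          marginal ρ0 πs ps t (s', a') * ((ps t (s', a')) sa.1).toReal *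
            ((πs (t + 1) sa.1) sa.2).toReal
          = ∑ a' : A, marginal ρ0 πs ps t (s', a') := by
        intro s'
        rw [Finset.sum_comm]
        refine Finset.sum_congr rfl fun a' _ => ?_
        simp_rw [mul_assoc, ← Finset.mul_sum]
        rw [sum_kernel (ps t (s', a')) (fun s => πs (t+1) s)]
        ring
      simp_rw [this]
      rw [← Fintype.sum_prod_type]
      exact ih
end M

lemma two_tv {X : Type*} [Fintype X] (q1 q2 : PMF X) :
    ∑ x, |(q1 x).toReal - (q2 x).toReal| = 2 * tv q1 q2 := by
  unfold tv; ring

lemma abs_triple (a1 a2 b1 b2 c1 c2 : ℝ) (ha1 : 0 ≤ a1) (hb2 : 0 ≤ b2) (hc1 : 0 ≤ c1)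
    (hc2 : 0 ≤ c2) :
    |a1*b1*c1 - a2*b2*c2| ≤ |a1-a2| * (b2*c2) + a1 * (|b1-b2| * c1) + a1 * (b2 * |c1-c2|) := by
  have h : a1*b1*c1 - a2*b2*c2 = (a1-a2)*(b2*c2) + a1*((b1-b2)*c1) + a1*(b2*(c1-c2)) := by
    ring
  rw [h]
  have t1 : |(a1-a2)*(b2*c2)| = |a1-a2| * (b2*c2) := by
    rw [abs_mul, abs_of_nonneg (by positivity : (0:ℝ) ≤ b2*c2)]
  have t2 : |a1*((b1-b2)*c1)| = a1 * (|b1-b2| * c1) := by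
    rw [abs_mul, abs_mul, abs_of_nonneg ha1, abs_of_nonneg hc1]
  have t3 : |a1*(b2*(c1-c2))| = a1 * (b2 * |c1-c2|) := by
    rw [abs_mul, abs_mul, abs_of_nonneg ha1, abs_of_nonneg hb2]
  calc |(a1-a2)*(b2*c2) + a1*((b1-b2)*c1) + a1*(b2*(c1-c2))|
      ≤ |(a1-a2)*(b2*c2) + a1*((b1-b2)*c1)| + |a1*(b2*(c1-c2))| := abs_add_le _ _
    _ ≤ |(a1-a2)*(b2*c2)| + |a1*((b1-b2)*c1)| + |a1*(b2*(c1-c2))| :=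
        add_le_add_left (abs_add_le _ _) _
    _ = _ := by rw [t1, t2, t3]

section Step
variable {S A : Type*} [Fintype S] [Fintype A]

lemma marginal_step_bound (ρ0 : PMF S) (π1 π2 : ℕ → S → PMF A) (p1 p2 : ℕ → S × A → PMF S)
    (t : ℕ) (εp E : ℝ) (hE : 0 ≤ E)
    (hmodel : ∑ sa : S × A, marginal ρ0 π1 p1 t sa * tv (p1 t sa) (p2 t sa) ≤ εp)
    (hpol : ∀ s, tv (π1 (t+1) s) (π2 (t+1) s) ≤ E) :
    ∑ sa : S × A, |marginal ρ0 π1 p1 (t+1) sa - marginal ρ0 π2 p2 (t+1) sa| ≤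
      (∑ sa : S × A, |marginal ρ0 π1 p1 t sa - marginal ρ0 π2 p2 t sa|) + 2*εp + 2*E := by
  set d1 := marginal ρ0 π1 p1 t with hd1def
  set d2 := marginal ρ0 π2 p2 t with hd2def
  have hd1nn : ∀ x, 0 ≤ d1 x := fun x => marginal_nonneg ρ0 π1 p1 t x
  have hd1sum : ∑ x : S × A, d1 x = 1 := marginal_sum_one ρ0 π1 p1 t
  have key : ∀ sa : S × A, |marginal ρ0 π1 p1 (t+1) sa - marginal ρ0 π2 p2 (t+1) sa| ≤
      ∑ x : S × A,
        (|d1 x - d2 x| * (((p2 t x) sa.1).toReal * ((π2 (t+1) sa.1) sa.2).toReal)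
        + d1 x * (|((p1 t x) sa.1).toReal - ((p2 t x) sa.1).toReal| * ((π1 (t+1) sa.1) sa.2).toReal)
        + d1 x * (((p2 t x) sa.1).toReal * |((π1 (t+1) sa.1) sa.2).toReal - ((π2 (t+1) sa.1) sa.2).toReal|)) := by
    intro sa
    have e1 : marginal ρ0 π1 p1 (t+1) sa =
        ∑ x : S × A, d1 x * ((p1 t x) sa.1).toReal * ((π1 (t+1) sa.1) sa.2).toReal := by
      show (∑ s' : S, ∑ a' : A, d1 (s',a') * ((p1 t (s',a')) sa.1).toReal *
        ((π1 (t+1) sa.1) sa.2).toReal) = _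
      rw [Fintype.sum_prod_type]
    have e2 : marginal ρ0 π2 p2 (t+1) sa =
        ∑ x : S × A, d2 x * ((p2 t x) sa.1).toReal * ((π2 (t+1) sa.1) sa.2).toReal := by
      show (∑ s' : S, ∑ a' : A, d2 (s',a') * ((p2 t (s',a')) sa.1).toReal *
        ((π2 (t+1) sa.1) sa.2).toReal) = _
      rw [Fintype.sum_prod_type]
    rw [e1, e2, ← Finset.sum_sub_distrib]
    refine (Finset.abs_sum_le_sum_abs _ _).trans (Finset.sum_le_sum fun x _ => ?_)
    exact abs_triple (d1 x) (d2 x) (((p1 t x) sa.1).toReal) (((p2 t x) sa.1).toReal)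
      (((π1 (t+1) sa.1) sa.2).toReal) (((π2 (t+1) sa.1) sa.2).toReal)
      (hd1nn x) ENNReal.toReal_nonneg ENNReal.toReal_nonneg ENNReal.toReal_nonneg
  calc ∑ sa : S × A, |marginal ρ0 π1 p1 (t+1) sa - marginal ρ0 π2 p2 (t+1) sa|
      ≤ ∑ sa : S × A, ∑ x : S × A,
        (|d1 x - d2 x| * (((p2 t x) sa.1).toReal * ((π2 (t+1) sa.1) sa.2).toReal)
        + d1 x * (|((p1 t x) sa.1).toReal - ((p2 t x) sa.1).toReal| * ((π1 (t+1) sa.1) sa.2).toReal)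
        + d1 x * (((p2 t x) sa.1).toReal * |((π1 (t+1) sa.1) sa.2).toReal - ((π2 (t+1) sa.1) sa.2).toReal|)) :=
        Finset.sum_le_sum fun sa _ => key sa
    _ = ∑ x : S × A, ∑ sa : S × A,
        (|d1 x - d2 x| * (((p2 t x) sa.1).toReal * ((π2 (t+1) sa.1) sa.2).toReal)
        + d1 x * (|((p1 t x) sa.1).toReal - ((p2 t x) sa.1).toReal| * ((π1 (t+1) sa.1) sa.2).toReal)
        + d1 x * (((p2 t x) sa.1).toReal * |((π1 (t+1) sa.1) sa.2).toReal - ((π2 (t+1) sa.1) sa.2).toReal|)) :=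
        Finset.sum_comm
    _ = (∑ x : S × A, ∑ sa : S × A,
          |d1 x - d2 x| * (((p2 t x) sa.1).toReal * ((π2 (t+1) sa.1) sa.2).toReal))
        + (∑ x : S × A, ∑ sa : S × A,
          d1 x * (|((p1 t x) sa.1).toReal - ((p2 t x) sa.1).toReal| * ((π1 (t+1) sa.1) sa.2).toReal))
        + (∑ x : S × A, ∑ sa : S × A,
          d1 x * (((p2 t x) sa.1).toReal * |((π1 (t+1) sa.1) sa.2).toReal - ((π2 (t+1) sa.1) sa.2).toReal|)) := by
        simp_rw [Finset.sum_add_distrib]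
    _ ≤ (∑ x : S × A, |d1 x - d2 x|) + 2*εp + 2*E := by
        gcongr ?_ + ?_ + ?_
        · apply le_of_eq
          refine Finset.sum_congr rfl fun x _ => ?_
          rw [← Finset.mul_sum, sum_kernel (p2 t x) (fun s => π2 (t+1) s), mul_one]
        · have hx : ∀ x : S × A, (∑ sa : S × A,
              d1 x * (|((p1 t x) sa.1).toReal - ((p2 t x) sa.1).toReal| * ((π1 (t+1) sa.1) sa.2).toReal))
              = d1 x * (2 * tv (p1 t x) (p2 t x)) := by
            intro x
            rw [← Finset.mul_sum, Fintype.sum_prod_type]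
            simp_rw [← Finset.mul_sum, sum_pmf_toReal, mul_one]
            rw [two_tv]
          calc (∑ x : S × A, ∑ sa : S × A,
              d1 x * (|((p1 t x) sa.1).toReal - ((p2 t x) sa.1).toReal| * ((π1 (t+1) sa.1) sa.2).toReal))
              = ∑ x : S × A, d1 x * (2 * tv (p1 t x) (p2 t x)) :=
                Finset.sum_congr rfl fun x _ => hx x
            _ = 2 * ∑ x : S × A, d1 x * tv (p1 t x) (p2 t x) := by
                rw [Finset.mul_sum]
                exact Finset.sum_congr rfl fun x _ => by ring
            _ ≤ 2 * εp := by linarith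
        · have hx : ∀ x : S × A, (∑ sa : S × A,
              d1 x * (((p2 t x) sa.1).toReal * |((π1 (t+1) sa.1) sa.2).toReal - ((π2 (t+1) sa.1) sa.2).toReal|))
              ≤ d1 x * (2 * E) := by
            intro x
            rw [← Finset.mul_sum, Fintype.sum_prod_type]
            simp_rw [← Finset.mul_sum]
            have hb : ∀ s : S, (∑ a : A, |((π1 (t+1) s) a).toReal - ((π2 (t+1) s) a).toReal|)
                ≤ 2 * E := by
              intro s
              rw [two_tv]
              have := hpol s
              linarith
            calc d1 x * ∑ s : S, ((p2 t x) s).toReal *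
                  (∑ a : A, |((π1 (t+1) s) a).toReal - ((π2 (t+1) s) a).toReal|)
                ≤ d1 x * ∑ s : S, ((p2 t x) s).toReal * (2 * E) := by
                  apply mul_le_mul_of_nonneg_left _ (hd1nn x)
                  exact Finset.sum_le_sum fun s _ =>
                    mul_le_mul_of_nonneg_left (hb s) ENNReal.toReal_nonneg
              _ = d1 x * (2 * E) := by rw [← Finset.sum_mul, sum_pmf_toReal, one_mul]
          calc (∑ x : S × A, ∑ sa : S × A,
              d1 x * (((p2 t x) sa.1).toReal * |((π1 (t+1) sa.1) sa.2).toReal - ((π2 (t+1) sa.1) sa.2).toReal|))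
              ≤ ∑ x : S × A, d1 x * (2 * E) := Finset.sum_le_sum fun x _ => hx x
            _ = 2 * E := by rw [← Finset.sum_mul, hd1sum, one_mul]

end Step

section Main
variable {S A : Type*} [Fintype S] [Fintype A]

lemma marginal_zero_diff (ρ0 : PMF S) (π1 π2 : ℕ → S → PMF A) (p1 p2 : ℕ → S × A → PMF S)
    (E : ℝ) (hE : ∀ s, tv (π1 0 s) (π2 0 s) ≤ E) :
    ∑ sa : S × A, |marginal ρ0 π1 p1 0 sa - marginal ρ0 π2 p2 0 sa| ≤ 2 * E := by
  show (∑ sa : S × A, |(ρ0 sa.1).toReal * ((π1 0 sa.1) sa.2).toReal -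
      (ρ0 sa.1).toReal * ((π2 0 sa.1) sa.2).toReal|) ≤ 2 * E
  rw [Fintype.sum_prod_type]
  have hpt : ∀ (s : S) (a : A), |(ρ0 s).toReal * ((π1 0 s) a).toReal -
      (ρ0 s).toReal * ((π2 0 s) a).toReal|
      = (ρ0 s).toReal * |((π1 0 s) a).toReal - ((π2 0 s) a).toReal| := by
    intro s a
    rw [← mul_sub, abs_mul, abs_of_nonneg ENNReal.toReal_nonneg]
  simp_rw [hpt, ← Finset.mul_sum]
  calc ∑ s : S, (ρ0 s).toReal * ∑ a : A, |((π1 0 s) a).toReal - ((π2 0 s) a).toReal|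
      ≤ ∑ s : S, (ρ0 s).toReal * (2 * E) := by
        refine Finset.sum_le_sum fun s _ => ?_
        apply mul_le_mul_of_nonneg_left _ ENNReal.toReal_nonneg
        rw [two_tv]
        have := hE s
        linarith
    _ = 2 * E := by rw [← Finset.sum_mul, sum_pmf_toReal, one_mul]

lemma abs_sum_r_le (r : S × A → ℝ) (rmax : ℝ) (hr : ∀ sa, |r sa| ≤ rmax)
    (d : S × A → ℝ) (hnn : ∀ sa, 0 ≤ d sa) (hsum : ∑ sa : S × A, d sa = 1) :
    |∑ sa : S × A, d sa * r sa| ≤ rmax := by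
  calc |∑ sa : S × A, d sa * r sa| ≤ ∑ sa : S × A, |d sa * r sa| :=
      Finset.abs_sum_le_sum_abs _ _
    _ ≤ ∑ sa : S × A, d sa * rmax := by
        refine Finset.sum_le_sum fun sa _ => ?_
        rw [abs_mul, abs_of_nonneg (hnn sa)]
        exact mul_le_mul_of_nonneg_left (hr sa) (hnn sa)
    _ = rmax := by rw [← Finset.sum_mul, hsum, one_mul]

end Main


lemma sum_mul_r_diff_le {S A : Type*} [Fintype S] [Fintype A]
    (r : S × A → ℝ) (rmax : ℝ) (hrmax : 0 ≤ rmax) (hr : ∀ sa, |r sa| ≤ rmax)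
    (d1 d2 : S × A → ℝ) (M : ℝ) (hM : ∑ sa : S × A, |d1 sa - d2 sa| ≤ M) :
    |(∑ sa : S × A, d1 sa * r sa) - ∑ sa : S × A, d2 sa * r sa| ≤ rmax * M := by
  rw [← Finset.sum_sub_distrib]
  calc |∑ sa : S × A, (d1 sa * r sa - d2 sa * r sa)|
      ≤ ∑ sa : S × A, |d1 sa * r sa - d2 sa * r sa| := Finset.abs_sum_le_sum_abs _ _
    _ = ∑ sa : S × A, |d1 sa - d2 sa| * |r sa| := by simp_rw [← sub_mul, abs_mul]
    _ ≤ ∑ sa : S × A, |d1 sa - d2 sa| * rmax :=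
        Finset.sum_le_sum fun sa _ => mul_le_mul_of_nonneg_left (hr sa) (abs_nonneg _)
    _ = (∑ sa : S × A, |d1 sa - d2 sa|) * rmax := (Finset.sum_mul _ _ _).symm
    _ ≤ M * rmax := mul_le_mul_of_nonneg_right hM hrmax
    _ = rmax * M := mul_comm _ _

set_option maxHeartbeats 1000000 in
/-- Branched rollout bound with model error under the data-collecting policy
(Theorem 4.2 / Theorem A.3). -/

theorem mbpo_branched_bound
    {S A : Type*} [Fintype S] [Fintype A] [Nonempty S] [Nonempty A]
    (p phat : S × A → PMF S) (πD π : S → PMF A) (ρ0 : PMF S)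
    (r : S × A → ℝ) (rmax : ℝ) (hrmax : 0 ≤ rmax) (hr : ∀ sa : S × A, |r sa| ≤ rmax)
    (γ : ℝ) (hγ0 : 0 < γ) (hγ1 : γ < 1) (k : ℕ) (εm επ : ℝ)
    (hεm : ∀ t : ℕ, ∑ sa : S × A,
      marginal ρ0 (fun _ => πD) (fun _ => p) t sa * tv (p sa) (phat sa) ≤ εm)
    (hεπ : ∀ s : S, tv (πD s) (π s) ≤ επ) :
    ret γ r (marginal ρ0 (fun _ => π) (fun _ => p)) ≥
      ret γ r (marginal ρ0
          (fun t => if t < k then π else πD) (fun t => if t < k then phat else p)) -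
        2 * rmax * (γ ^ (k + 1) * επ / (1 - γ) ^ 2 + (γ ^ k + 2) * επ / (1 - γ) +
          (k : ℝ) * (εm + 2 * επ) / (1 - γ)) := by
  have hγ' : 0 < 1 - γ := by linarith
  set πb : ℕ → S → PMF A := fun t => if t < k then π else πD with hπbdef
  set pb : ℕ → S × A → PMF S := fun t => if t < k then phat else p with hpbdef
  set dπ := marginal ρ0 (fun _ => π) (fun _ => p) with hdπdef
  set dD := marginal ρ0 (fun _ => πD) (fun _ => p) with hdDdef
  set db := marginal ρ0 πb pb with hdbdef
  have hεπ0 : 0 ≤ επ := le_trans (tv_nonneg _ _) (hεπ (Classical.arbitrary S))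
  have hεm0 : 0 ≤ εm := by
    refine le_trans (Finset.sum_nonneg fun sa _ => ?_) (hεm 0)
    exact mul_nonneg (marginal_nonneg _ _ _ _ _) (tv_nonneg _ _)
  -- (A) distance between dπ and dD
  have hA : ∀ t : ℕ, ∑ sa : S × A, |dπ t sa - dD t sa| ≤ 2 * (t + 1 : ℝ) * επ := by
    intro t
    induction t with
    | zero =>
        have := marginal_zero_diff ρ0 (fun _ => π) (fun _ => πD) (fun _ => p) (fun _ => p) επ
          (fun s => by rw [tv_comm]; exact hεπ s)
        rw [← hdπdef, ← hdDdef] at this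
        push_cast
        linarith
    | succ t ih =>
        have hstep := marginal_step_bound ρ0 (fun _ => π) (fun _ => πD) (fun _ => p) (fun _ => p)
          t 0 επ hεπ0
          (by
            refine le_of_eq (Finset.sum_eq_zero fun sa _ => ?_)
            rw [tv_self, mul_zero])
          (fun s => by rw [tv_comm]; exact hεπ s)
        rw [← hdπdef, ← hdDdef] at hstep
        push_cast
        push_cast at ih
        linarith
  -- (B) distance between dD and db, before the branch
  have hB : ∀ t : ℕ, t ≤ k → ∑ sa : S × A, |dD t sa - db t sa| ≤
      2 * επ + (t : ℝ) * (2 * εm + 2 * επ) := by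
    intro t
    induction t with
    | zero =>
        intro _
        have := marginal_zero_diff ρ0 (fun _ => πD) πb (fun _ => p) pb επ
          (fun s => by
            by_cases h0 : 0 < k
            · simp only [hπbdef, if_pos h0]
              exact hεπ s
            · simp only [hπbdef, if_neg h0, tv_self]
              exact hεπ0)
        rw [← hdDdef, ← hdbdef] at this
        push_cast
        linarith
    | succ t ih =>
        intro hl
        have htk : t < k := lt_of_lt_of_le (Nat.lt_succ_self t) hl
        have ih' := ih (le_of_lt htk)
        have hstep := marginal_step_bound ρ0 (fun _ => πD) πb (fun _ => p) pb
          t εm επ hεπ0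
          (by
            have : pb t = phat := by simp only [hpbdef, if_pos htk]
            rw [this]
            exact hεm t)
          (fun s => by
            by_cases h1 : t + 1 < k
            · simp only [hπbdef, if_pos h1]
              exact hεπ s
            · simp only [hπbdef, if_neg h1, tv_self]
              exact hεπ0)
        rw [← hdDdef, ← hdbdef] at hstep
        push_cast
        push_cast at ih'
        linarith
  -- triangle bound for t ≤ k
  set C : ℝ := 2 * k * εm + 4 * k * επ + 4 * επ with hCdef
  have htri : ∀ t : ℕ, t ≤ k → ∑ sa : S × A, |dπ t sa - db t sa| ≤ C := by
    intro t ht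
    have h1 := hA t
    have h2 := hB t ht
    have h3 : ∑ sa : S × A, |dπ t sa - db t sa| ≤
        (∑ sa : S × A, |dπ t sa - dD t sa|) + ∑ sa : S × A, |dD t sa - db t sa| := by
      rw [← Finset.sum_add_distrib]
      exact Finset.sum_le_sum fun sa _ => abs_sub_le _ _ _
    have hcast : (t : ℝ) ≤ (k : ℝ) := Nat.cast_le.mpr ht
    have hc1 : (t : ℝ) * (2 * εm + 2 * επ) ≤ (k : ℝ) * (2 * εm + 2 * επ) := by
      apply mul_le_mul_of_nonneg_right hcast
      linarith
    have hc2 : 2 * ((t : ℝ) + 1) * επ ≤ 2 * ((k : ℝ) + 1) * επ := by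
      apply mul_le_mul_of_nonneg_right _ hεπ0
      linarith
    rw [hCdef]
    push_cast
    nlinarith [h1, h2, h3]
  -- (C) after the branch
  have hC : ∀ j : ℕ, ∑ sa : S × A, |dπ (k + j) sa - db (k + j) sa| ≤ C + (j : ℝ) * (2 * επ) := by
    intro j
    induction j with
    | zero =>
        have := htri k le_rfl
        push_cast
        simpa using this
    | succ j ih =>
        have hnot : ¬ (k + j + 1 < k) := by omega
        have hstep := marginal_step_bound ρ0 (fun _ => π) πb (fun _ => p) pb
          (k + j) 0 επ hεπ0
          (by
            refine le_of_eq (Finset.sum_eq_zero fun sa _ => ?_)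
            have : pb (k + j) = p := by simp only [hpbdef, if_neg (by omega : ¬ (k + j < k))]
            rw [this, tv_self, mul_zero])
          (fun s => by
            simp only [hπbdef, if_neg hnot]
            rw [tv_comm]
            exact hεπ s)
        rw [← hdπdef, ← hdbdef] at hstep
        have heq : k + (j + 1) = (k + j) + 1 := by omega
        rw [heq]
        push_cast
        push_cast at ih
        linarith
  -- unified bound
  have hall : ∀ t : ℕ, ∑ sa : S × A, |dπ t sa - db t sa| ≤ C + ((t - k : ℕ) : ℝ) * (2 * επ) := by
    intro t
    by_cases ht : t ≤ k
    · have : (t - k : ℕ) = 0 := by omega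
      rw [this]
      simpa using htri t ht
    · have hj : t = k + (t - k) := by omega
      calc ∑ sa : S × A, |dπ t sa - db t sa|
          = ∑ sa : S × A, |dπ (k + (t - k)) sa - db (k + (t - k)) sa| := by rw [← hj]
        _ ≤ C + ((t - k : ℕ) : ℝ) * (2 * επ) := hC (t - k)
  -- return bound
  have hγabs : ‖γ‖ < 1 := by rw [Real.norm_eq_abs, abs_of_nonneg hγ0.le]; exact hγ1
  have hgeo : Summable (fun t : ℕ => γ ^ t) := summable_geometric_of_lt_one hγ0.le hγ1
  have hDπ : ∀ t, |∑ sa : S × A, dπ t sa * r sa| ≤ rmax := fun t =>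
    abs_sum_r_le r rmax hr (dπ t) (fun sa => marginal_nonneg _ _ _ _ _)
      (marginal_sum_one _ _ _ _)
  have hDb : ∀ t, |∑ sa : S × A, db t sa * r sa| ≤ rmax := fun t =>
    abs_sum_r_le r rmax hr (db t) (fun sa => marginal_nonneg _ _ _ _ _)
      (marginal_sum_one _ _ _ _)
  have hbnd : ∀ (d : ℕ → S × A → ℝ), (∀ t, |∑ sa : S × A, d t sa * r sa| ≤ rmax) →
      Summable (fun t : ℕ => γ ^ t * ∑ sa : S × A, d t sa * r sa) := by
    intro d hd
    apply Summable.of_norm_bounded (hgeo.mul_left rmax)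
    intro t
    rw [Real.norm_eq_abs, abs_mul, abs_pow, abs_of_nonneg hγ0.le, mul_comm]
    exact mul_le_mul_of_nonneg_right (hd t) (pow_nonneg hγ0.le t)
  have hs1 : Summable (fun t : ℕ => γ ^ t * ∑ sa : S × A, dπ t sa * r sa) := hbnd dπ hDπ
  have hs2 : Summable (fun t : ℕ => γ ^ t * ∑ sa : S × A, db t sa * r sa) := hbnd db hDb
  have hst : Summable (fun t : ℕ => (t : ℝ) * γ ^ t) := by
    have := summable_pow_mul_geometric_of_norm_lt_one 1 hγabs
    simpa using this
  have hsub : Summable (fun t : ℕ => ((t - k : ℕ) : ℝ) * γ ^ t) := by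
    apply Summable.of_nonneg_of_le (fun t => by positivity) _ hst
    intro t
    apply mul_le_mul_of_nonneg_right _ (pow_nonneg hγ0.le t)
    exact_mod_cast Nat.cast_le.mpr (Nat.sub_le t k)
  have hsφ : Summable (fun t : ℕ => rmax * C * γ ^ t +
      (2 * rmax * επ) * (((t - k : ℕ) : ℝ) * γ ^ t)) :=
    (hgeo.mul_left (rmax * C)).add (hsub.mul_left (2 * rmax * επ))
  -- value of the shifted series
  have htsub : ∑' t : ℕ, ((t - k : ℕ) : ℝ) * γ ^ t = γ ^ k * (γ / (1 - γ) ^ 2) := by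
    have h1 := Summable.sum_add_tsum_nat_add k hsub
    have h2 : ∑ i ∈ Finset.range k, ((i - k : ℕ) : ℝ) * γ ^ i = 0 := by
      apply Finset.sum_eq_zero
      intro i hi
      have hik := Finset.mem_range.mp hi
      have : i - k = 0 := by omega
      rw [this]
      simp
    have h3 : (fun i : ℕ => ((i + k - k : ℕ) : ℝ) * γ ^ (i + k)) =
        (fun i : ℕ => γ ^ k * ((i : ℝ) * γ ^ i)) := by
      funext i
      rw [Nat.add_sub_cancel, pow_add]
      ring
    rw [h2, zero_add, h3] at h1
    rw [← h1, tsum_mul_left, tsum_coe_mul_geometric_of_norm_lt_one hγabs]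
  have hkey : ret γ r db - ret γ r dπ ≤
      rmax * C * (1 - γ)⁻¹ + (2 * rmax * επ) * (γ ^ k * (γ / (1 - γ) ^ 2)) := by
    have e : ret γ r db - ret γ r dπ = ∑' t : ℕ,
        (γ ^ t * (∑ sa : S × A, db t sa * r sa) - γ ^ t * ∑ sa : S × A, dπ t sa * r sa) := by
      rw [ret, ret, ← Summable.tsum_sub hs2 hs1]
    rw [e]
    have hle : ∀ t : ℕ,
        γ ^ t * (∑ sa : S × A, db t sa * r sa) - γ ^ t * (∑ sa : S × A, dπ t sa * r sa) ≤
        rmax * C * γ ^ t + (2 * rmax * επ) * (((t - k : ℕ) : ℝ) * γ ^ t) := by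
      intro t
      have habs : |(∑ sa : S × A, db t sa * r sa) - ∑ sa : S × A, dπ t sa * r sa| ≤
          rmax * (C + ((t - k : ℕ) : ℝ) * (2 * επ)) := by
        apply sum_mul_r_diff_le r rmax hrmax hr (db t) (dπ t)
        have := hall t
        calc ∑ sa : S × A, |db t sa - dπ t sa| = ∑ sa : S × A, |dπ t sa - db t sa| :=
            Finset.sum_congr rfl fun sa _ => abs_sub_comm _ _
          _ ≤ _ := hall t
      have h1 : γ ^ t * (∑ sa : S × A, db t sa * r sa) -
          γ ^ t * (∑ sa : S × A, dπ t sa * r sa) ≤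
          γ ^ t * (rmax * (C + ((t - k : ℕ) : ℝ) * (2 * επ))) := by
        rw [← mul_sub]
        apply mul_le_mul_of_nonneg_left _ (pow_nonneg hγ0.le t)
        exact le_trans (le_abs_self _) habs
      calc γ ^ t * (∑ sa : S × A, db t sa * r sa) -
            γ ^ t * (∑ sa : S × A, dπ t sa * r sa)
          ≤ γ ^ t * (rmax * (C + ((t - k : ℕ) : ℝ) * (2 * επ))) := h1
        _ = rmax * C * γ ^ t + (2 * rmax * επ) * (((t - k : ℕ) : ℝ) * γ ^ t) := by ring
    calc ∑' t : ℕ, (γ ^ t * (∑ sa : S × A, db t sa * r sa) -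
          γ ^ t * ∑ sa : S × A, dπ t sa * r sa)
        ≤ ∑' t : ℕ, (rmax * C * γ ^ t + (2 * rmax * επ) * (((t - k : ℕ) : ℝ) * γ ^ t)) :=
          Summable.tsum_le_tsum hle (hs2.sub hs1) hsφ
      _ = rmax * C * (1 - γ)⁻¹ + (2 * rmax * επ) * (γ ^ k * (γ / (1 - γ) ^ 2)) := by
          rw [Summable.tsum_add (hgeo.mul_left (rmax * C)) (hsub.mul_left (2 * rmax * επ)),
            tsum_mul_left, tsum_mul_left, htsub, tsum_geometric_of_lt_one hγ0.le hγ1]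
  -- final arithmetic
  have hfin : rmax * C * (1 - γ)⁻¹ + (2 * rmax * επ) * (γ ^ k * (γ / (1 - γ) ^ 2)) ≤
      2 * rmax * (γ ^ (k + 1) * επ / (1 - γ) ^ 2 + (γ ^ k + 2) * επ / (1 - γ) +
        (k : ℝ) * (εm + 2 * επ) / (1 - γ)) := by
    have hinv : 0 ≤ (1 - γ)⁻¹ := inv_nonneg.mpr hγ'.le
    have hγk : 0 ≤ γ ^ k := pow_nonneg hγ0.le k
    have e : 2 * rmax * (γ ^ (k + 1) * επ / (1 - γ) ^ 2 + (γ ^ k + 2) * επ / (1 - γ) +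
          (k : ℝ) * (εm + 2 * επ) / (1 - γ)) -
        (rmax * C * (1 - γ)⁻¹ + (2 * rmax * επ) * (γ ^ k * (γ / (1 - γ) ^ 2))) =
        2 * rmax * επ * γ ^ k * (1 - γ)⁻¹ := by
      rw [hCdef, pow_succ γ k]
      field_simp
      ring
    have hnn : 0 ≤ 2 * rmax * επ * γ ^ k * (1 - γ)⁻¹ := by positivity
    linarith [e, hnn]
  linarith [hkey, hfin]
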